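/- With g as above (g(z) = z∫₀^{t₀} f'(z e^{β(θ)}) dθ − ∫₀^{t₀} f(z e^{β(θ)}) e^{−β(θ)} dθ, f C¹ convex, β continuous), g is nonincreasing on (−∞, 0]: for b ≤ b₁ ≤ 0, g(b) ≥ g(b₁). -/

import Mathlib

lemma key5 (f : ℝ → ℝ) (hf : ContDiff ℝ 1 f) (hf' : Monotone (deriv f)) (c : ℝ) (hc : 0 < c)
    (b b₁ : ℝ) (hbb : b ≤ b₁) (hb₁ : b₁ ≤ 0) :
    b₁ * deriv f (b₁ * c) - f (b₁ * c) * c⁻¹ ≤ b * deriv f (b * c) - f (b * c) * c⁻¹ := by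
  rcases eq_or_lt_of_le hbb with rfl | hlt
  · exact le_rfl
  · have hcc : b * c < b₁ * c := by nlinarith
    obtain ⟨ξ, hξ, hd⟩ := exists_hasDerivAt_eq_slope f (deriv f) hcc
      (hf.continuous.continuousOn)
      (fun x _ => ((hf.differentiable one_ne_zero) x).hasDerivAt)
    have hξ1 : b * c ≤ ξ := hξ.1.le
    have hξ2 : ξ ≤ b₁ * c := hξ.2.le
    have h1 : deriv f (b * c) ≤ deriv f ξ := hf' hξ1
    have h2 : deriv f ξ ≤ deriv f (b₁ * c) := hf' hξ2
    have hslope : f (b₁ * c) - f (b * c) = deriv f ξ * (b₁ * c - b * c) := by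
      rw [hd, div_mul_cancel₀]
      exact ne_of_gt (by linarith)
    have hb : b ≤ 0 := le_trans hbb hb₁
    have e1 : b * deriv f ξ ≤ b * deriv f (b * c) := mul_le_mul_of_nonpos_left h1 hb
    have e2 : b₁ * deriv f (b₁ * c) ≤ b₁ * deriv f ξ := mul_le_mul_of_nonpos_left h2 hb₁
    have hfe : f (b₁ * c) * c⁻¹ - f (b * c) * c⁻¹ = deriv f ξ * (b₁ - b) := by
      field_simp
      rw [mul_comm c b]
      nlinarith [hslope]
    nlinarith [hfe, e1, e2]

theorem stmt5 (f β g : ℝ → ℝ) (t₀ : ℝ) (ht : 0 < t₀)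
    (hf : ContDiff ℝ 1 f) (hf' : Monotone (deriv f)) (hβ : Continuous β)
    (hg : ∀ z : ℝ, g z = z * (∫ θ in (0:ℝ)..t₀, deriv f (z * Real.exp (β θ)))
      - ∫ θ in (0:ℝ)..t₀, f (z * Real.exp (β θ)) * Real.exp (-β θ)) :
    ∀ b b₁ : ℝ, b ≤ b₁ → b₁ ≤ 0 → g b₁ ≤ g b := by
  intro b b₁ hbb hb₁
  have hcd : Continuous (deriv f) := hf.continuous_deriv le_rfl
  have hcont : ∀ z : ℝ, Continuous (fun θ => z * deriv f (z * Real.exp (β θ))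
      - f (z * Real.exp (β θ)) * Real.exp (-β θ)) := by
    intro z
    exact (continuous_const.mul (hcd.comp (continuous_const.mul hβ.rexp))).sub
      ((hf.continuous.comp (continuous_const.mul hβ.rexp)).mul hβ.neg.rexp)
  have hrw : ∀ z : ℝ, g z = ∫ θ in (0:ℝ)..t₀,
      (z * deriv f (z * Real.exp (β θ)) - f (z * Real.exp (β θ)) * Real.exp (-β θ)) := by
    intro z
    rw [hg z, intervalIntegral.integral_sub, intervalIntegral.integral_const_mul]
    · exact (continuous_const.mul (hcd.comp (continuous_const.mul hβ.rexp))).intervalIntegrable _ _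
    · exact ((hf.continuous.comp (continuous_const.mul hβ.rexp)).mul (hβ.neg.rexp)).intervalIntegrable _ _
  rw [hrw b, hrw b₁]
  apply intervalIntegral.integral_mono_on ht.le
    ((hcont b₁).intervalIntegrable _ _) ((hcont b).intervalIntegrable _ _)
  intro θ _
  have := key5 f hf hf' (Real.exp (β θ)) (Real.exp_pos _) b b₁ hbb hb₁
  rw [Real.exp_neg]
  linarith [this]
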